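/- Let k ≤ n be natural numbers, w₀ : [0,∞) → [0,∞) locally integrable against t^(k-1) dt, and 0 ≤ a ≤ b. Then (n / (b^n - a^n)) · ∫ₐᵇ w₀(t) t^(n-1) dt ≤ (n/k) · (k / (b^k - a^k)) · ∫ₐᵇ w₀(t) t^(k-1) dt. -/
import Mathlib


theorem stmt_8 (k n : ℕ) (hk : 1 ≤ k) (hkn : k ≤ n) (w₀ : ℝ → ℝ)
    (hpos : ∀ t, 0 ≤ w₀ t) (a b : ℝ) (ha : 0 ≤ a) (hab : a ≤ b)
    (hint : IntervalIntegrable (fun t => w₀ t * t ^ (k - 1)) MeasureTheory.volume a b) :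
    (n / (b ^ n - a ^ n)) * ∫ t in a..b, w₀ t * t ^ (n - 1) ≤
      ((n : ℝ) / k) * ((k / (b ^ k - a ^ k)) * ∫ t in a..b, w₀ t * t ^ (k - 1)) := by
  rcases eq_or_lt_of_le hab with rfl | hab'
  · simp
  have hb : 0 < b := lt_of_le_of_lt ha hab'
  have hn1 : 1 ≤ n := le_trans hk hkn
  have hXk : (0:ℝ) < b ^ k - a ^ k :=
    sub_pos.mpr (pow_lt_pow_left₀ hab' ha (by omega))
  have hXn : (0:ℝ) < b ^ n - a ^ n :=
    sub_pos.mpr (pow_lt_pow_left₀ hab' ha (by omega))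
  have hkne : (k:ℝ) ≠ 0 := by
    exact Nat.cast_ne_zero.mpr (by omega)
  have heq : ∀ t : ℝ, w₀ t * t ^ (n - 1) = (w₀ t * t ^ (k - 1)) * t ^ (n - k) := by
    intro t
    rw [mul_assoc, ← pow_add]
    congr 2
    omega
  have hintN : IntervalIntegrable (fun t => w₀ t * t ^ (n - 1))
      MeasureTheory.volume a b := by
    have h := hint.mul_continuousOn (g := fun t : ℝ => t ^ (n - k))
      (Continuous.continuousOn (by continuity))
    simpa only [heq] using h
  have hpt : ∀ t ∈ Set.Icc a b,
      (n / (b ^ n - a ^ n)) * (w₀ t * t ^ (n - 1)) ≤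
      (n / (b ^ k - a ^ k)) * (w₀ t * t ^ (k - 1)) := by
    intro t ht
    have ht0 : 0 ≤ t := le_trans ha ht.1
    have key : t ^ (n - k) * (b ^ k - a ^ k) ≤ b ^ n - a ^ n := by
      have h1 : t ^ (n - k) * (b ^ k - a ^ k) ≤ b ^ (n - k) * (b ^ k - a ^ k) := by
        gcongr
        exact ht.2
      have h2 : b ^ (n - k) * (b ^ k - a ^ k) = b ^ n - b ^ (n - k) * a ^ k := by
        rw [mul_sub, ← pow_add, Nat.sub_add_cancel hkn]
      have h3 : a ^ n ≤ b ^ (n - k) * a ^ k := by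
        calc a ^ n = a ^ (n - k) * a ^ k := by rw [← pow_add, Nat.sub_add_cancel hkn]
        _ ≤ b ^ (n - k) * a ^ k := by gcongr
      linarith
    rw [div_mul_eq_mul_div, div_mul_eq_mul_div, div_le_div_iff₀ hXn hXk, heq t]
    have h0 : 0 ≤ (n:ℝ) * (w₀ t * t ^ (k - 1)) :=
      mul_nonneg (Nat.cast_nonneg n) (mul_nonneg (hpos t) (pow_nonneg ht0 _))
    nlinarith [mul_le_mul_of_nonneg_left key h0]
  have hmain : (n / (b ^ n - a ^ n)) * ∫ t in a..b, w₀ t * t ^ (n - 1) ≤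
      (n / (b ^ k - a ^ k)) * ∫ t in a..b, w₀ t * t ^ (k - 1) := by
    rw [← intervalIntegral.integral_const_mul, ← intervalIntegral.integral_const_mul]
    exact intervalIntegral.integral_mono_on hab (hintN.const_mul _) (hint.const_mul _) hpt
  have hrw : ((n : ℝ) / k) * ((k / (b ^ k - a ^ k)) * ∫ t in a..b, w₀ t * t ^ (k - 1)) =
      (n / (b ^ k - a ^ k)) * ∫ t in a..b, w₀ t * t ^ (k - 1) := by
    rw [← mul_assoc, div_mul_div_comm, mul_comm (n:ℝ) (k:ℝ), mul_div_mul_left _ _ hkne]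
  rw [hrw]
  exact hmain
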